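/- Let τ, α > 0 and μ² ≥ 0 be real, set β = α/τ, let l > 0, let n ≥ 1 be an integer, put kₙ = nπ/l, and let ω₁, ω₂ ∈ ℂ with ω₁ ≠ ω₂ satisfy ω₁ + ω₂ = (1 + μ²kₙ²)/τ and ω₁·ω₂ = (α/τ)·kₙ². Let φₙ, ψₙ be real numbers and define e, q : ℝ × ℝ → ℂ by e(x,t) = [ (ω₁·e^{−ω₂t} − ω₂·e^{−ω₁t})·φₙ + kₙ·(e^{−ω₁t} − e^{−ω₂t})·ψₙ ] / (ω₁ − ω₂) · cos(kₙx) and q(x,t) = [ −kₙβ·(e^{−ω₁t} − e^{−ω₂t})·φₙ + (ω₁·e^{−ω₁t} − ω₂·e^{−ω₂t})·ψₙ ] / (ω₁ − ω₂) · sin(kₙx). Then: (i) ∂ₜe + ∂ₓq = 0 on ℝ²; (ii) τ·∂ₜq + q − μ²·∂ₓ²q + α·∂ₓe = 0 on ℝ²; (iii) e(x,0) = φₙ·cos(kₙx) and q(x,0) = ψₙ·sin(kₙx) for all x; (iv) q(0,t) = 0 and q(l,t) = 0 for all t. Thus each Fourier mode of the series solution satisfies the homogeneous Guyer–Krumhansl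 system with insulating (zero-flux) boundary conditions and the corresponding cosine/sine initial data. -/

import Mathlib

open Complex

/-- Partial derivative in the spatial variable `x` (first coordinate). -/
noncomputable def px (u : ℝ × ℝ → ℂ) : ℝ × ℝ → ℂ :=
  fun p => deriv (fun x => u (x, p.2)) p.1

/-- Partial derivative in the time variable `t` (second coordinate). -/
noncomputable def pt (u : ℝ × ℝ → ℂ) : ℝ × ℝ → ℂ :=
  fun p => deriv (fun t => u (p.1, t)) p.2

/-- Each Fourier mode of the series solution satisfies the homogeneous
Guyer–Krumhansl system with insulating (zero-flux) boundary conditions and the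
corresponding cosine/sine initial data. Here `μ2` plays the role of `μ²` and
`β = α/τ`. -/
theorem GK_fourier_mode_solution
    (τ α μ2 β : ℝ) (hτ : 0 < τ) (hα : 0 < α) (hμ2 : 0 ≤ μ2) (hβ : β = α / τ)
    (l : ℝ) (hl : 0 < l) (n : ℕ) (hn : 1 ≤ n) (kn : ℝ) (hkn : kn = n * Real.pi / l)
    (ω₁ ω₂ : ℂ) (hne : ω₁ ≠ ω₂)
    (hsum : ω₁ + ω₂ = (1 + (μ2 : ℂ) * (kn : ℂ)^2) / (τ : ℂ))
    (hprod : ω₁ * ω₂ = ((α : ℂ) / (τ : ℂ)) * (kn : ℂ)^2)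
    (φn ψn : ℝ) (e q : ℝ × ℝ → ℂ)
    (hedef : ∀ p : ℝ × ℝ, e p =
      ((ω₁ * Complex.exp (-ω₂ * (p.2 : ℂ)) - ω₂ * Complex.exp (-ω₁ * (p.2 : ℂ))) * (φn : ℂ)
        + (kn : ℂ) * (Complex.exp (-ω₁ * (p.2 : ℂ)) - Complex.exp (-ω₂ * (p.2 : ℂ))) * (ψn : ℂ))
        / (ω₁ - ω₂) * Complex.cos ((kn : ℂ) * (p.1 : ℂ)))
    (hqdef : ∀ p : ℝ × ℝ, q p =
      (-(kn : ℂ) * (β : ℂ) * (Complex.exp (-ω₁ * (p.2 : ℂ)) - Complex.exp (-ω₂ * (p.2 : ℂ))) * (φn : ℂ)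
        + (ω₁ * Complex.exp (-ω₁ * (p.2 : ℂ)) - ω₂ * Complex.exp (-ω₂ * (p.2 : ℂ))) * (ψn : ℂ))
        / (ω₁ - ω₂) * Complex.sin ((kn : ℂ) * (p.1 : ℂ))) :
    (∀ p : ℝ × ℝ, pt e p + px q p = 0)
    ∧ (∀ p : ℝ × ℝ,
        (τ : ℂ) * pt q p + q p - (μ2 : ℂ) * px (px q) p + (α : ℂ) * px e p = 0)
    ∧ (∀ x : ℝ, e (x, 0) = (φn : ℂ) * Complex.cos ((kn : ℂ) * (x : ℂ))
        ∧ q (x, 0) = (ψn : ℂ) * Complex.sin ((kn : ℂ) * (x : ℂ)))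
    ∧ (∀ t : ℝ, q (0, t) = 0 ∧ q (l, t) = 0) := by
  have hw : ω₁ - ω₂ ≠ 0 := sub_ne_zero.mpr hne
  have hτ0 : (τ : ℂ) ≠ 0 := by exact_mod_cast hτ.ne'
  have hl0 : (l : ℂ) ≠ 0 := by exact_mod_cast hl.ne'
  -- derivative helpers
  have hE : ∀ (ω : ℂ) (t : ℝ), HasDerivAt (fun s : ℝ => Complex.exp (-ω * s))
      (-ω * Complex.exp (-ω * t)) t := by
    intro ω t
    have h1 : HasDerivAt (fun z : ℂ => Complex.exp (-ω * z)) (-ω * Complex.exp (-ω * t)) (t : ℂ) := by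
      have h2 := (Complex.hasDerivAt_exp (-ω * (t:ℂ))).comp (t:ℂ)
        ((hasDerivAt_id (t:ℂ)).const_mul (-ω))
      simpa [Function.comp_def, mul_comm] using h2
    exact h1.comp_ofReal
  have hC : ∀ x : ℝ, HasDerivAt (fun s : ℝ => Complex.cos ((kn:ℂ) * s))
      (-((kn:ℂ) * Complex.sin ((kn:ℂ) * x))) x := by
    intro x
    have h1 : HasDerivAt (fun z : ℂ => Complex.cos ((kn:ℂ) * z))
        (-((kn:ℂ) * Complex.sin ((kn:ℂ) * x))) (x : ℂ) := by
      have h2 := (Complex.hasDerivAt_cos ((kn:ℂ) * (x:ℂ))).comp (x:ℂ)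
        ((hasDerivAt_id (x:ℂ)).const_mul (kn:ℂ))
      simpa [Function.comp_def, mul_comm] using h2
    exact h1.comp_ofReal
  have hS : ∀ x : ℝ, HasDerivAt (fun s : ℝ => Complex.sin ((kn:ℂ) * s))
      ((kn:ℂ) * Complex.cos ((kn:ℂ) * x)) x := by
    intro x
    have h1 : HasDerivAt (fun z : ℂ => Complex.sin ((kn:ℂ) * z))
        ((kn:ℂ) * Complex.cos ((kn:ℂ) * x)) (x : ℂ) := by
      have h2 := (Complex.hasDerivAt_sin ((kn:ℂ) * (x:ℂ))).comp (x:ℂ)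
        ((hasDerivAt_id (x:ℂ)).const_mul (kn:ℂ))
      simpa [Function.comp_def, mul_comm] using h2
    exact h1.comp_ofReal
  -- partial derivatives of e and q
  have hpte : ∀ p : ℝ × ℝ, pt e p =
      ((ω₁ * (-ω₂ * Complex.exp (-ω₂ * (p.2:ℂ))) - ω₂ * (-ω₁ * Complex.exp (-ω₁ * (p.2:ℂ)))) * (φn:ℂ)
        + (kn:ℂ) * ((-ω₁ * Complex.exp (-ω₁ * (p.2:ℂ))) - (-ω₂ * Complex.exp (-ω₂ * (p.2:ℂ)))) * (ψn:ℂ))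
        / (ω₁ - ω₂) * Complex.cos ((kn:ℂ) * (p.1:ℂ)) := by
    intro p
    have hfun : (fun t : ℝ => e (p.1, t)) = fun t : ℝ =>
        ((ω₁ * Complex.exp (-ω₂ * (t:ℂ)) - ω₂ * Complex.exp (-ω₁ * (t:ℂ))) * (φn:ℂ)
          + (kn:ℂ) * (Complex.exp (-ω₁ * (t:ℂ)) - Complex.exp (-ω₂ * (t:ℂ))) * (ψn:ℂ))
          / (ω₁ - ω₂) * Complex.cos ((kn:ℂ) * (p.1:ℂ)) := funext fun t => hedef (p.1, t)
    have hD := ((((((hE ω₂ p.2).const_mul ω₁).sub ((hE ω₁ p.2).const_mul ω₂)).mul_const (φn:ℂ)).add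
      ((((hE ω₁ p.2).sub (hE ω₂ p.2)).const_mul (kn:ℂ)).mul_const (ψn:ℂ))).div_const (ω₁ - ω₂)).mul_const
      (Complex.cos ((kn:ℂ) * (p.1:ℂ)))
    rw [pt, hfun]
    exact hD.deriv
  have hptq : ∀ p : ℝ × ℝ, pt q p =
      (-(kn:ℂ) * (β:ℂ) * ((-ω₁ * Complex.exp (-ω₁ * (p.2:ℂ))) - (-ω₂ * Complex.exp (-ω₂ * (p.2:ℂ)))) * (φn:ℂ)
        + (ω₁ * (-ω₁ * Complex.exp (-ω₁ * (p.2:ℂ))) - ω₂ * (-ω₂ * Complex.exp (-ω₂ * (p.2:ℂ)))) * (ψn:ℂ))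
        / (ω₁ - ω₂) * Complex.sin ((kn:ℂ) * (p.1:ℂ)) := by
    intro p
    have hfun : (fun t : ℝ => q (p.1, t)) = fun t : ℝ =>
        (-(kn:ℂ) * (β:ℂ) * (Complex.exp (-ω₁ * (t:ℂ)) - Complex.exp (-ω₂ * (t:ℂ))) * (φn:ℂ)
          + (ω₁ * Complex.exp (-ω₁ * (t:ℂ)) - ω₂ * Complex.exp (-ω₂ * (t:ℂ))) * (ψn:ℂ))
          / (ω₁ - ω₂) * Complex.sin ((kn:ℂ) * (p.1:ℂ)) := funext fun t => hqdef (p.1, t)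
    have hD := ((((((hE ω₁ p.2).sub (hE ω₂ p.2)).const_mul (-(kn:ℂ) * (β:ℂ))).mul_const (φn:ℂ)).add
      ((((hE ω₁ p.2).const_mul ω₁).sub ((hE ω₂ p.2).const_mul ω₂)).mul_const (ψn:ℂ))).div_const
      (ω₁ - ω₂)).mul_const (Complex.sin ((kn:ℂ) * (p.1:ℂ)))
    rw [pt, hfun]
    exact hD.deriv
  have hpxe : ∀ p : ℝ × ℝ, px e p =
      ((ω₁ * Complex.exp (-ω₂ * (p.2:ℂ)) - ω₂ * Complex.exp (-ω₁ * (p.2:ℂ))) * (φn:ℂ)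
        + (kn:ℂ) * (Complex.exp (-ω₁ * (p.2:ℂ)) - Complex.exp (-ω₂ * (p.2:ℂ))) * (ψn:ℂ))
        / (ω₁ - ω₂) * (-((kn:ℂ) * Complex.sin ((kn:ℂ) * (p.1:ℂ)))) := by
    intro p
    have hfun : (fun x : ℝ => e (x, p.2)) = fun x : ℝ =>
        ((ω₁ * Complex.exp (-ω₂ * (p.2:ℂ)) - ω₂ * Complex.exp (-ω₁ * (p.2:ℂ))) * (φn:ℂ)
          + (kn:ℂ) * (Complex.exp (-ω₁ * (p.2:ℂ)) - Complex.exp (-ω₂ * (p.2:ℂ))) * (ψn:ℂ))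
          / (ω₁ - ω₂) * Complex.cos ((kn:ℂ) * (x:ℂ)) := funext fun x => hedef (x, p.2)
    have hD := (hC p.1).const_mul
      (((ω₁ * Complex.exp (-ω₂ * (p.2:ℂ)) - ω₂ * Complex.exp (-ω₁ * (p.2:ℂ))) * (φn:ℂ)
        + (kn:ℂ) * (Complex.exp (-ω₁ * (p.2:ℂ)) - Complex.exp (-ω₂ * (p.2:ℂ))) * (ψn:ℂ))
        / (ω₁ - ω₂))
    rw [px, hfun]
    exact hD.deriv
  have hpxq : ∀ p : ℝ × ℝ, px q p =
      (-(kn:ℂ) * (β:ℂ) * (Complex.exp (-ω₁ * (p.2:ℂ)) - Complex.exp (-ω₂ * (p.2:ℂ))) * (φn:ℂ)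
        + (ω₁ * Complex.exp (-ω₁ * (p.2:ℂ)) - ω₂ * Complex.exp (-ω₂ * (p.2:ℂ))) * (ψn:ℂ))
        / (ω₁ - ω₂) * ((kn:ℂ) * Complex.cos ((kn:ℂ) * (p.1:ℂ))) := by
    intro p
    have hfun : (fun x : ℝ => q (x, p.2)) = fun x : ℝ =>
        (-(kn:ℂ) * (β:ℂ) * (Complex.exp (-ω₁ * (p.2:ℂ)) - Complex.exp (-ω₂ * (p.2:ℂ))) * (φn:ℂ)
          + (ω₁ * Complex.exp (-ω₁ * (p.2:ℂ)) - ω₂ * Complex.exp (-ω₂ * (p.2:ℂ))) * (ψn:ℂ))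
          / (ω₁ - ω₂) * Complex.sin ((kn:ℂ) * (x:ℂ)) := funext fun x => hqdef (x, p.2)
    have hD := (hS p.1).const_mul
      ((-(kn:ℂ) * (β:ℂ) * (Complex.exp (-ω₁ * (p.2:ℂ)) - Complex.exp (-ω₂ * (p.2:ℂ))) * (φn:ℂ)
        + (ω₁ * Complex.exp (-ω₁ * (p.2:ℂ)) - ω₂ * Complex.exp (-ω₂ * (p.2:ℂ))) * (ψn:ℂ))
        / (ω₁ - ω₂))
    rw [px, hfun]
    exact hD.deriv
  have hpxxq : ∀ p : ℝ × ℝ, px (px q) p =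
      (-(kn:ℂ) * (β:ℂ) * (Complex.exp (-ω₁ * (p.2:ℂ)) - Complex.exp (-ω₂ * (p.2:ℂ))) * (φn:ℂ)
        + (ω₁ * Complex.exp (-ω₁ * (p.2:ℂ)) - ω₂ * Complex.exp (-ω₂ * (p.2:ℂ))) * (ψn:ℂ))
        / (ω₁ - ω₂) * ((kn:ℂ) * (-((kn:ℂ) * Complex.sin ((kn:ℂ) * (p.1:ℂ))))) := by
    intro p
    have hfun : (fun x : ℝ => px q (x, p.2)) = fun x : ℝ =>
        (-(kn:ℂ) * (β:ℂ) * (Complex.exp (-ω₁ * (p.2:ℂ)) - Complex.exp (-ω₂ * (p.2:ℂ))) * (φn:ℂ)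
          + (ω₁ * Complex.exp (-ω₁ * (p.2:ℂ)) - ω₂ * Complex.exp (-ω₂ * (p.2:ℂ))) * (ψn:ℂ))
          / (ω₁ - ω₂) * ((kn:ℂ) * Complex.cos ((kn:ℂ) * (x:ℂ))) := funext fun x => hpxq (x, p.2)
    have hD := (((hC p.1).const_mul (kn:ℂ)).const_mul
      ((-(kn:ℂ) * (β:ℂ) * (Complex.exp (-ω₁ * (p.2:ℂ)) - Complex.exp (-ω₂ * (p.2:ℂ))) * (φn:ℂ)
        + (ω₁ * Complex.exp (-ω₁ * (p.2:ℂ)) - ω₂ * Complex.exp (-ω₂ * (p.2:ℂ))) * (ψn:ℂ))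
        / (ω₁ - ω₂)))
    rw [px, hfun]
    exact hD.deriv
  -- algebraic relations
  have hβc : (β:ℂ) * (kn:ℂ)^2 = ω₁ * ω₂ := by
    rw [hprod, hβ]; push_cast; ring
  have H1 : (1:ℂ) + (μ2:ℂ) * (kn:ℂ)^2 = (τ:ℂ) * (ω₁ + ω₂) := by
    rw [hsum]; field_simp
  have HA : (α:ℂ) = (β:ℂ) * (τ:ℂ) := by
    rw [hβ]; push_cast; field_simp
  have HP : (τ:ℂ) * (ω₁ * ω₂) = (α:ℂ) * (kn:ℂ)^2 := by
    rw [hprod]; field_simp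
  refine ⟨?_, ?_, ?_, ?_⟩
  · intro p
    rw [hpte p, hpxq p]
    linear_combination (-(Complex.cos ((kn:ℂ) * (p.1:ℂ))) *
      (Complex.exp (-ω₁ * (p.2:ℂ)) - Complex.exp (-ω₂ * (p.2:ℂ))) * (φn:ℂ) / (ω₁ - ω₂)) * hβc
  · intro p
    rw [hptq p, hqdef p, hpxxq p, hpxe p]
    linear_combination
      ((Complex.sin ((kn:ℂ) * (p.1:ℂ)) / (ω₁ - ω₂)) *
        ((-(kn:ℂ) * (β:ℂ)) * (φn:ℂ) * Complex.exp (-ω₁ * (p.2:ℂ))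
          + (kn:ℂ) * (β:ℂ) * (φn:ℂ) * Complex.exp (-ω₂ * (p.2:ℂ))
          + ω₁ * (ψn:ℂ) * Complex.exp (-ω₁ * (p.2:ℂ))
          - ω₂ * (ψn:ℂ) * Complex.exp (-ω₂ * (p.2:ℂ)))) * H1
      + ((Complex.sin ((kn:ℂ) * (p.1:ℂ)) / (ω₁ - ω₂)) *
        ((kn:ℂ) * ω₂ * (φn:ℂ) * Complex.exp (-ω₁ * (p.2:ℂ))
          - (kn:ℂ) * ω₁ * (φn:ℂ) * Complex.exp (-ω₂ * (p.2:ℂ)))) * HA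
      + ((Complex.sin ((kn:ℂ) * (p.1:ℂ)) / (ω₁ - ω₂)) *
        ((ψn:ℂ) * Complex.exp (-ω₁ * (p.2:ℂ)) - (ψn:ℂ) * Complex.exp (-ω₂ * (p.2:ℂ)))) * HP
  · intro x
    constructor
    · rw [hedef (x, 0)]
      simp only [Complex.ofReal_zero, mul_zero, Complex.exp_zero]
      field_simp
      ring
    · rw [hqdef (x, 0)]
      simp only [Complex.ofReal_zero, mul_zero, Complex.exp_zero]
      field_simp
      ring
  · intro t
    have hkl : (kn:ℂ) * (l:ℂ) = (n:ℂ) * Real.pi := by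
      rw [hkn]; push_cast; field_simp
    have hs0 : Complex.sin ((n:ℂ) * Real.pi) = 0 := by
      exact_mod_cast Complex.sin_nat_mul_pi n
    constructor
    · rw [hqdef (0, t)]
      simp
    · rw [hqdef (l, t)]
      simp only
      rw [hkl, hs0, mul_zero]
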